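/- Let f : [a,b] → ℝ be convex and x, y, z ∈ [a,b] with (x+y+z)/3 = (a+b)/2. Then (2/3)·(f((x+y)/2) + f((y+z)/2) + f((x+z)/2)) ≤ f(a) + f(b). -/

import Mathlib

theorem stmt_8 (a b : ℝ) (hab : a ≤ b) (f : ℝ → ℝ)
    (hconv : ∀ x ∈ Set.Icc a b, ∀ y ∈ Set.Icc a b, ∀ t ∈ Set.Icc (0:ℝ) 1,
      f (t * x + (1 - t) * y) ≤ t * f x + (1 - t) * f y)
    (x y z : ℝ) (hx : x ∈ Set.Icc a b) (hy : y ∈ Set.Icc a b)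
    (hz : z ∈ Set.Icc a b) (hc : (x + y + z) / 3 = (a + b) / 2) :
    (2 / 3) * (f ((x + y) / 2) + f ((y + z) / 2) + f ((x + z) / 2)) ≤ f a + f b := by
  obtain ⟨hx1, hx2⟩ := hx
  obtain ⟨hy1, hy2⟩ := hy
  obtain ⟨hz1, hz2⟩ := hz
  rcases eq_or_lt_of_le hab with h | h
  · subst h
    have hxa : x = a := le_antisymm hx2 hx1
    have hya : y = a := le_antisymm hy2 hy1
    have hza : z = a := le_antisymm hz2 hz1
    rw [hxa, hya, hza]
    have h2 : (a + a) / 2 = a := by ring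
    rw [h2]
    linarith
  · have hba : (0:ℝ) < b - a := by linarith
    have key : ∀ m, a ≤ m → m ≤ b →
        (b - a) * f m ≤ (b - m) * f a + (m - a) * f b := by
      intro m hm1 hm2
      have ht : (b - m) / (b - a) ∈ Set.Icc (0:ℝ) 1 := by
        constructor
        · apply div_nonneg <;> linarith
        · rw [div_le_one hba]; linarith
      have h1 := hconv a ⟨le_refl a, hab⟩ b ⟨hab, le_refl b⟩ _ ht
      have heq : (b - m) / (b - a) * a + (1 - (b - m) / (b - a)) * b = m := by
        field_simp
        ring
      rw [heq] at h1
      have h2 : (b - a) * f m ≤ (b - a) * ((b - m) / (b - a) * f a + (1 - (b - m) / (b - a)) * f b) :=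
        by nlinarith
      calc (b - a) * f m ≤ _ := h2
        _ = (b - m) * f a + (m - a) * f b := by field_simp; ring
    have hz3 : z = 3 * ((a + b) / 2) - x - y := by linarith
    subst hz3
    have k1 := key ((x + y) / 2) (by linarith) (by linarith)
    have k2 := key ((y + (3 * ((a + b) / 2) - x - y)) / 2) (by linarith) (by linarith)
    have k3 := key ((x + (3 * ((a + b) / 2) - x - y)) / 2) (by linarith) (by linarith)
    have goal2 : (b - a) * ((2 / 3) * (f ((x + y) / 2) + f ((y + (3 * ((a + b) / 2) - x - y)) / 2) + f ((x + (3 * ((a + b) / 2) - x - y)) / 2))) ≤ (b - a) * (f a + f b) := by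
      nlinarith [k1, k2, k3]
    exact le_of_mul_le_mul_left goal2 hba
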